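/- If every agent's additive utility u'_i is consistent with a strict ranking π over the goods (π(g) ≤ π(g') implies u'_i(g) ≥ u'_i(g')), then any allocation in which each agent receives at most one good from each consecutive block of n goods of π (blocks {nℓ−n+1,…,nℓ} for ℓ = 1,…,⌈m/n⌉) is SD-EF1 with respect to the profile (u'_i). -/
import Mathlib

open Finset

/-- Two distinct goods of one agent cannot lie in the same block. -/
lemma aux_two {n m : ℕ} (hn : 0 < n) {M : Type*} [Fintype M] [DecidableEq M]
    (π : M ≃ Fin m) (A : Fin n → Finset M)
    (hblock : ∀ i, ∀ ℓ ∈ Finset.Icc 1 ((m + n - 1) / n),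
        ((A i).filter (fun g =>
          n * ℓ - n + 1 ≤ (π g : ℕ) + 1 ∧ (π g : ℕ) + 1 ≤ n * ℓ)).card ≤ 1)
    (a : Fin n) (k : ℕ) (y z : M) (hy : y ∈ A a) (hz : z ∈ A a) (hne : y ≠ z)
    (hy1 : n * k ≤ (π y : ℕ)) (hy2 : (π y : ℕ) < n * (k+1))
    (hz1 : n * k ≤ (π z : ℕ)) (hz2 : (π z : ℕ) < n * (k+1)) : False := by
  have hms : n * (k+1) = n * k + n := Nat.mul_succ n k
  have hm : (π y : ℕ) < m := (π y).isLt
  have hmem : (k+1) ∈ Finset.Icc 1 ((m + n - 1) / n) := by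
    rw [Finset.mem_Icc]
    exact ⟨Nat.le_add_left 1 k, (Nat.le_div_iff_mul_le hn).mpr
      (by rw [Nat.mul_comm]; omega)⟩
  have h1 := hblock a (k+1) hmem
  have h2 : 1 < ((A a).filter (fun g =>
      n * (k+1) - n + 1 ≤ (π g : ℕ) + 1 ∧ (π g : ℕ) + 1 ≤ n * (k+1))).card := by
    apply Finset.one_lt_card.mpr
    refine ⟨y, ?_, z, ?_, hne⟩ <;> rw [Finset.mem_filter]
    · exact ⟨hy, by omega, by omega⟩
    · exact ⟨hz, by omega, by omega⟩
  omega

/-- Every agent owns a good in every full block. -/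
lemma aux_exists {n m : ℕ} (hn : 0 < n) {M : Type*} [Fintype M] [DecidableEq M]
    (π : M ≃ Fin m) (A : Fin n → Finset M)
    (hpart : ∀ g : M, ∃! i, g ∈ A i)
    (hblock : ∀ i, ∀ ℓ ∈ Finset.Icc 1 ((m + n - 1) / n),
        ((A i).filter (fun g =>
          n * ℓ - n + 1 ≤ (π g : ℕ) + 1 ∧ (π g : ℕ) + 1 ≤ n * ℓ)).card ≤ 1)
    (a : Fin n) (k : ℕ) (hk : n * (k+1) ≤ m) :
    ∃ e ∈ A a, n * k ≤ (π e : ℕ) ∧ (π e : ℕ) < n * (k+1) := by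
  classical
  by_contra hcon
  push_neg at hcon
  choose own hown using fun g => (hpart g).exists
  have hms : n * (k+1) = n * k + n := Nat.mul_succ n k
  set s : Finset (Fin m) := (Finset.Ico (n*k) (n*(k+1))).attachFin
    (fun p hp => lt_of_lt_of_le (Finset.mem_Ico.mp hp).2 hk) with hsdef
  have hcard : s.card = n := by
    rw [hsdef, Finset.card_attachFin, Nat.card_Ico]; omega
  have hmem : ∀ p : Fin m, p ∈ s ↔ n*k ≤ (p:ℕ) ∧ (p:ℕ) < n*(k+1) := by
    intro p; simp [hsdef, Finset.mem_attachFin, Finset.mem_Ico]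
  have hmaps : ∀ p ∈ s, own (π.symm p) ∈ Finset.univ.erase a := by
    intro p hp
    rw [Finset.mem_erase]
    refine ⟨fun heq => ?_, Finset.mem_univ _⟩
    have h1 : π.symm p ∈ A a := by rw [← heq]; exact hown _
    have hp1 := (hmem p).mp hp
    have hval : (π (π.symm p) : ℕ) = (p : ℕ) := by rw [Equiv.apply_symm_apply]
    exact absurd (hcon _ h1 (by omega)) (by omega)
  have hinj : Set.InjOn (fun p => own (π.symm p)) s := by
    intro p hp q hq hpq
    by_contra hne
    have hyz : π.symm p ≠ π.symm q := fun hc => hne (by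
      have := congrArg π hc; simpa using this)
    have hp1 := (hmem p).mp hp
    have hq1 := (hmem q).mp hq
    have hvp : (π (π.symm p) : ℕ) = (p : ℕ) := by rw [Equiv.apply_symm_apply]
    have hvq : (π (π.symm q) : ℕ) = (q : ℕ) := by rw [Equiv.apply_symm_apply]
    exact aux_two hn π A hblock (own (π.symm p)) k (π.symm p) (π.symm q)
      (hown _) (by rw [show own (π.symm p) = own (π.symm q) from hpq]; exact hown _)
      hyz (by omega) (by omega) (by omega) (by omega)
  have hle := Finset.card_le_card_of_injOn _ hmaps hinj
  rw [hcard, Finset.card_erase_of_mem (Finset.mem_univ a), Finset.card_univ,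
    Fintype.card_fin] at hle
  omega

/-- If every agent's additive utility is consistent with a strict ranking `π`,
then any allocation giving each agent at most one good from each consecutive
block of `n` goods of `π` is SD-EF1 with respect to the profile. -/
theorem stmt_1 {n m : ℕ} (hn : 0 < n) {M : Type*} [Fintype M] [DecidableEq M]
    (π : M ≃ Fin m) (u : Fin n → M → ℝ)
    (hcons : ∀ i (g g' : M), (π g : ℕ) ≤ (π g' : ℕ) → u i g' ≤ u i g)
    (A : Fin n → Finset M)
    (hpart : ∀ g : M, ∃! i, g ∈ A i)
    (hblock : ∀ i, ∀ ℓ ∈ Finset.Icc 1 ((m + n - 1) / n),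
        ((A i).filter (fun g =>
          n * ℓ - n + 1 ≤ (π g : ℕ) + 1 ∧ (π g : ℕ) + 1 ≤ n * ℓ)).card ≤ 1) :
    ∀ i j, A j = ∅ ∨ ∃ g ∈ A j, ∀ h : M,
        (((A j).erase g).filter (fun x => u i h ≤ u i x)).card ≤
          ((A i).filter (fun x => u i h ≤ u i x)).card := by
  classical
  intro i j
  rcases eq_or_ne (A j) ∅ with hAj | hAj
  · exact Or.inl hAj
  right
  obtain ⟨g, hg, hgmin⟩ := (A j).exists_min_image (fun x => (π x : ℕ))
    (Finset.nonempty_iff_ne_empty.mpr hAj)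
  refine ⟨g, hg, fun h => ?_⟩
  set S := ((A j).erase g).filter (fun x => u i h ≤ u i x) with hSdef
  set T := (A i).filter (fun x => u i h ≤ u i x) with hTdef
  rcases S.eq_empty_or_nonempty with hSe | ⟨x0, hx0⟩
  · rw [hSe]; simp
  haveI : Nonempty M := ⟨x0⟩
  -- basic facts about members of S
  have hSfact : ∀ x ∈ S, x ∈ A j ∧ x ≠ g ∧ u i h ≤ u i x := by
    intro x hx
    rw [hSdef, Finset.mem_filter, Finset.mem_erase] at hx
    exact ⟨hx.1.2, hx.1.1, hx.2⟩
  have hq1 : ∀ x ∈ S, 1 ≤ (π x : ℕ) / n := by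
    intro x hx
    obtain ⟨hxj, hxg, _⟩ := hSfact x hx
    rw [Nat.one_le_div_iff hn]
    by_contra hlt
    push_neg at hlt
    have hgle : (π g : ℕ) ≤ (π x : ℕ) := hgmin x hxj
    exact aux_two hn π A hblock j 0 g x hg hxj (Ne.symm hxg)
      (by omega) (by simpa using (by omega : (π g : ℕ) < n))
      (by omega) (by simpa using (by omega : (π x : ℕ) < n))
  -- choose for each x ∈ S an element of T one block below
  have hch : ∀ x ∈ S, ∃ e, ∃ k : ℕ, e ∈ T ∧
      n * k ≤ (π e : ℕ) ∧ (π e : ℕ) < n * (k + 1) ∧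
      n * (k + 1) ≤ (π x : ℕ) ∧ (π x : ℕ) < n * (k + 2) := by
    intro x hx
    obtain ⟨hxj, hxg, hux⟩ := hSfact x hx
    obtain ⟨k, hk⟩ := Nat.exists_eq_add_of_le (hq1 x hx)
    have hq : (π x : ℕ) / n = k + 1 := by omega
    have hdx := Nat.div_add_mod (π x : ℕ) n
    rw [hq] at hdx
    have hmod : (π x : ℕ) % n < n := Nat.mod_lt _ hn
    have hms0 : n * (k + 1) = n * k + n := by ring
    have hms1 : n * (k + 2) = n * (k + 1) + n := by ring
    have hm : n * (k + 1) ≤ m := le_of_lt (lt_of_le_of_lt (by omega) (π x).isLt)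
    obtain ⟨e, he, he1, he2⟩ := aux_exists hn π A hpart hblock i k hm
    refine ⟨e, k, ?_, he1, he2, by omega, by omega⟩
    rw [hTdef, Finset.mem_filter]
    have hle : (π e : ℕ) ≤ (π x : ℕ) := by omega
    exact ⟨he, le_trans hux (hcons i e x hle)⟩
  choose! f K hf using hch
  have hmaps : ∀ x ∈ S, f x ∈ T := fun x hx => (hf x hx).1
  have hinj : Set.InjOn f S := by
    intro x hx y hy hxy
    by_contra hne
    obtain ⟨_, hfx1, hfx2, hfx3, hfx4⟩ := hf x hx
    obtain ⟨_, hfy1, hfy2, hfy3, hfy4⟩ := hf y hy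
    rw [hxy] at hfx1 hfx2
    have hK : K x = K y := by
      rcases lt_trichotomy (K x) (K y) with hlt | heq | hlt
      · have := Nat.mul_le_mul_left n (by omega : K x + 1 ≤ K y)
        omega
      · exact heq
      · have := Nat.mul_le_mul_left n (by omega : K y + 1 ≤ K x)
        omega
    rw [hK] at hfx3 hfx4
    obtain ⟨hxj, _, _⟩ := hSfact x hx
    obtain ⟨hyj, _, _⟩ := hSfact y hy
    have hms : n * (K y + 2) = n * (K y + 1 + 1) := by ring
    exact aux_two hn π A hblock j (K y + 1) x y hxj hyj hne
      hfx3 (by omega) hfy3 (by omega)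
  exact Finset.card_le_card_of_injOn f hmaps hinj
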